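/- Let α ∈ (2,3), δ > 0, and λ_δ(n) = (2(3−α)/δ²) K(nδ) where K(x) = ∫₀¹ (1−cos(xξ))/ξ^α dξ. Then n ↦ 1/λ_δ(n) is strictly decreasing and strictly convex on (0,∞); equivalently, 2(K'(x))² − K(x)K''(x) > 0 for all x > 0. -/

import Mathlib

open Real MeasureTheory Set intervalIntegral Filter Metric

namespace InvLambdaAux18

lemma cont_rpow {c : ℝ} (hc : 0 ≤ c) : Continuous fun ξ : ℝ => ξ ^ c :=
  continuous_iff_continuousAt.2 fun x => Real.continuousAt_rpow_const x c (Or.inr hc)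

lemma meas_div {c : ℝ} (hc : 0 ≤ c) {g : ℝ → ℝ} (hg : Continuous g) :
    Measurable fun ξ => g ξ / ξ ^ c :=
  hg.measurable.div (cont_rpow hc).measurable

lemma II_of_bound {h : ℝ → ℝ} (hm : Measurable h) (C : ℝ) {r : ℝ} (hr : (-1:ℝ) < r)
    (hb : ∀ ξ ∈ Set.Ioc (0:ℝ) 1, ‖h ξ‖ ≤ C * ξ ^ r) :
    IntervalIntegrable h volume 0 1 := by
  rw [intervalIntegrable_iff_integrableOn_Ioc_of_le zero_le_one]
  have hg : IntegrableOn (fun ξ : ℝ => C * ξ ^ r) (Set.Ioc (0:ℝ) 1) volume := by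
    have := (intervalIntegrable_rpow' (a := 0) (b := 1) hr).const_mul C
    rwa [intervalIntegrable_iff_integrableOn_Ioc_of_le zero_le_one] at this
  refine hg.mono' hm.aestronglyMeasurable ?_
  filter_upwards [ae_restrict_mem measurableSet_Ioc] with ξ hξ
  exact hb ξ hξ

variable {α : ℝ}

lemma intK (hα2 : 2 < α) (hα3 : α < 3) (x : ℝ) :
    IntervalIntegrable (fun ξ => (1 - Real.cos (x * ξ)) / ξ ^ α) volume 0 1 := by
  refine II_of_bound (meas_div (by linarith) (by continuity)) (x ^ 2 / 2)
    (r := 2 - α) (by linarith) ?_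
  rintro ξ ⟨h0, h1⟩
  have hξα : 0 < ξ ^ α := Real.rpow_pos_of_pos h0 _
  have hcos : 1 - Real.cos (x * ξ) ≤ (x * ξ) ^ 2 / 2 := by
    nlinarith [Real.one_sub_sq_div_two_le_cos (x := x * ξ)]
  have hnn : 0 ≤ 1 - Real.cos (x * ξ) := by nlinarith [Real.cos_le_one (x * ξ)]
  rw [Real.norm_eq_abs, abs_div, abs_of_nonneg hnn, abs_of_nonneg hξα.le, div_le_iff₀ hξα]
  have hpow : ξ ^ (2 - α) * ξ ^ α = ξ ^ 2 := by
    rw [← Real.rpow_add h0, ← Real.rpow_natCast ξ 2]; norm_num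
  calc 1 - Real.cos (x * ξ) ≤ (x * ξ) ^ 2 / 2 := hcos
    _ = x ^ 2 / 2 * (ξ ^ (2 - α) * ξ ^ α) := by rw [hpow]; ring
    _ = x ^ 2 / 2 * ξ ^ (2 - α) * ξ ^ α := by ring

lemma intK' (hα2 : 2 < α) (hα3 : α < 3) (x : ℝ) :
    IntervalIntegrable (fun ξ => Real.sin (x * ξ) / ξ ^ (α - 1)) volume 0 1 := by
  refine II_of_bound (meas_div (by linarith) (by continuity)) |x|
    (r := 2 - α) (by linarith) ?_
  rintro ξ ⟨h0, h1⟩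
  have hξα : 0 < ξ ^ (α - 1) := Real.rpow_pos_of_pos h0 _
  have hsin : |Real.sin (x * ξ)| ≤ |x| * ξ := by
    calc |Real.sin (x * ξ)| ≤ |x * ξ| := Real.abs_sin_le_abs
      _ = |x| * ξ := by rw [abs_mul, abs_of_nonneg h0.le]
  rw [Real.norm_eq_abs, abs_div, abs_of_nonneg hξα.le, div_le_iff₀ hξα]
  have hpow : ξ ^ (2 - α) * ξ ^ (α - 1) = ξ := by
    rw [← Real.rpow_add h0]
    norm_num
  calc |Real.sin (x * ξ)| ≤ |x| * ξ := hsin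
    _ = |x| * (ξ ^ (2 - α) * ξ ^ (α - 1)) := by rw [hpow]
    _ = |x| * ξ ^ (2 - α) * ξ ^ (α - 1) := by ring

lemma intK'' (hα2 : 2 < α) (hα3 : α < 3) (x : ℝ) :
    IntervalIntegrable (fun ξ => Real.cos (x * ξ) / ξ ^ (α - 2)) volume 0 1 := by
  refine II_of_bound (meas_div (by linarith) (by continuity)) 1
    (r := 2 - α) (by linarith) ?_
  rintro ξ ⟨h0, h1⟩
  have hξα : 0 < ξ ^ (α - 2) := Real.rpow_pos_of_pos h0 _
  rw [Real.norm_eq_abs, abs_div, abs_of_nonneg hξα.le, div_le_iff₀ hξα]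
  have hpow : ξ ^ (2 - α) * ξ ^ (α - 2) = 1 := by
    rw [← Real.rpow_add h0]
    norm_num
  calc |Real.cos (x * ξ)| ≤ 1 := Real.abs_cos_le_one _
    _ = 1 * ξ ^ (2 - α) * ξ ^ (α - 2) := by rw [mul_assoc, hpow, mul_one]





section Btest
variable {α : ℝ}


lemma ode1 (hα2 : 2 < α) (hα3 : α < 3) (x : ℝ) :
    x * (∫ ξ in (0:ℝ)..1, Real.sin (x * ξ) / ξ ^ (α - 1)) =
      (α - 1) * (∫ ξ in (0:ℝ)..1, (1 - Real.cos (x * ξ)) / ξ ^ α) + (1 - Real.cos x) := by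
  set H : ℝ → ℝ := fun ξ => (1 - Real.cos (x * ξ)) * ξ ^ (1 - α) with hH
  have hH0 : H 0 = 0 := by simp [hH]
  have hderiv : ∀ ξ ∈ Ioo (0:ℝ) 1, HasDerivAt H
      (x * (Real.sin (x * ξ) / ξ ^ (α - 1)) + (1 - α) * ((1 - Real.cos (x * ξ)) / ξ ^ α)) ξ := by
    intro ξ hξ
    have hξ0 : ξ ≠ 0 := ne_of_gt hξ.1
    have h1 : HasDerivAt (fun ξ => 1 - Real.cos (x * ξ)) (x * Real.sin (x * ξ)) ξ := by
      have h := ((Real.hasDerivAt_cos (x * ξ)).comp ξ ((hasDerivAt_id ξ).const_mul x)).const_sub 1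
      exact h.congr_deriv (by simp only [id_eq, mul_one, one_mul]; ring)
    have h2 : HasDerivAt (fun ξ : ℝ => ξ ^ (1 - α)) ((1 - α) * ξ ^ (1 - α - 1)) ξ :=
      Real.hasDerivAt_rpow_const (Or.inl hξ0)
    have h3 := h1.mul h2
    refine h3.congr_deriv ?_
    have e1 : ξ ^ (1 - α) = (ξ ^ (α - 1))⁻¹ := by
      rw [show (1 - α) = -(α - 1) by ring, Real.rpow_neg hξ.1.le]
    have e2 : ξ ^ (1 - α - 1) = (ξ ^ α)⁻¹ := by
      rw [show (1 - α - 1) = -α by ring, Real.rpow_neg hξ.1.le]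
    rw [e1, e2]
    field_simp
  have hcont : ContinuousOn H (Icc 0 1) := by
    intro ξ hξ
    rcases eq_or_ne ξ 0 with rfl | hne
    · have hbound : ∀ t ∈ Icc (0:ℝ) 1, H t ≤ x ^ 2 / 2 * t ^ (3 - α) := by
        rintro t ⟨ht0, ht1⟩
        rcases eq_or_lt_of_le ht0 with rfl | ht0'
        · simp [hH, Real.zero_rpow (by linarith : (1:ℝ) - α ≠ 0),
            Real.zero_rpow (by linarith : (3:ℝ) - α ≠ 0)]
        · have hcos : 1 - Real.cos (x * t) ≤ (x * t) ^ 2 / 2 := by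
            nlinarith [Real.one_sub_sq_div_two_le_cos (x := x * t)]
          have hpow : 0 ≤ t ^ (1 - α) := Real.rpow_nonneg ht0 _
          have hpows : t ^ 2 * t ^ (1 - α) = t ^ (3 - α) := by
            rw [← Real.rpow_natCast t 2, ← Real.rpow_add ht0']
            norm_num
            congr 1
            ring
          calc H t ≤ (x * t) ^ 2 / 2 * t ^ (1 - α) := by
                exact mul_le_mul_of_nonneg_right hcos hpow
            _ = x ^ 2 / 2 * (t ^ 2 * t ^ (1 - α)) := by ring
            _ = x ^ 2 / 2 * t ^ (3 - α) := by rw [hpows]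
      have hnn : ∀ t ∈ Icc (0:ℝ) 1, 0 ≤ H t := by
        rintro t ⟨ht0, ht1⟩
        exact mul_nonneg (by nlinarith [Real.cos_le_one (x * t)]) (Real.rpow_nonneg ht0 _)
      rw [ContinuousWithinAt, hH0]
      have hg : Tendsto (fun t : ℝ => x ^ 2 / 2 * t ^ (3 - α)) (nhdsWithin 0 (Icc 0 1)) (nhds 0) := by
        have := ((cont_rpow (by linarith : (0:ℝ) ≤ 3 - α)).tendsto 0).const_mul (x ^ 2 / 2)
        rw [Real.zero_rpow (by linarith : (3:ℝ) - α ≠ 0), mul_zero] at this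
        exact this.mono_left nhdsWithin_le_nhds
      exact squeeze_zero' (eventually_nhdsWithin_of_forall hnn)
        (eventually_nhdsWithin_of_forall hbound) hg
    · have : ContinuousAt H ξ := by
        exact (Continuous.continuousAt (by continuity)).mul
          (Real.continuousAt_rpow_const ξ _ (Or.inl hne))
      exact this.continuousWithinAt
  have hint : IntervalIntegrable (fun ξ =>
      x * (Real.sin (x * ξ) / ξ ^ (α - 1)) + (1 - α) * ((1 - Real.cos (x * ξ)) / ξ ^ α))
      volume 0 1 :=
    ((intK' hα2 hα3 x).const_mul x).add ((intK hα2 hα3 x).const_mul (1 - α))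
  have hFTC := integral_eq_sub_of_hasDeriv_right_of_le zero_le_one hcont
    (fun ξ hξ => (hderiv ξ hξ).hasDerivWithinAt) hint
  rw [intervalIntegral.integral_add ((intK' hα2 hα3 x).const_mul x)
      ((intK hα2 hα3 x).const_mul (1 - α)),
    intervalIntegral.integral_const_mul, intervalIntegral.integral_const_mul, hH0] at hFTC
  have hH1 : H 1 = 1 - Real.cos x := by simp [hH]
  rw [hH1] at hFTC
  linarith

end Btest

section B2
variable {α : ℝ}

lemma ode2 (hα2 : 2 < α) (hα3 : α < 3) (x : ℝ) :
    x * (∫ ξ in (0:ℝ)..1, Real.cos (x * ξ) / ξ ^ (α - 2)) =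
      (α - 2) * (∫ ξ in (0:ℝ)..1, Real.sin (x * ξ) / ξ ^ (α - 1)) + Real.sin x := by
  set H : ℝ → ℝ := fun ξ => Real.sin (x * ξ) * ξ ^ (2 - α) with hH
  have hH0 : H 0 = 0 := by simp [hH]
  have hderiv : ∀ ξ ∈ Ioo (0:ℝ) 1, HasDerivAt H
      (x * (Real.cos (x * ξ) / ξ ^ (α - 2)) + (2 - α) * (Real.sin (x * ξ) / ξ ^ (α - 1))) ξ := by
    intro ξ hξ
    have hξ0 : ξ ≠ 0 := ne_of_gt hξ.1
    have h1 : HasDerivAt (fun ξ => Real.sin (x * ξ)) (x * Real.cos (x * ξ)) ξ := by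
      have h := (Real.hasDerivAt_sin (x * ξ)).comp ξ ((hasDerivAt_id ξ).const_mul x)
      exact h.congr_deriv (by simp only [id_eq, mul_one, one_mul]; ring)
    have h2 : HasDerivAt (fun ξ : ℝ => ξ ^ (2 - α)) ((2 - α) * ξ ^ (2 - α - 1)) ξ :=
      Real.hasDerivAt_rpow_const (Or.inl hξ0)
    have h3 := h1.mul h2
    refine h3.congr_deriv ?_
    have e1 : ξ ^ (2 - α) = (ξ ^ (α - 2))⁻¹ := by
      rw [show (2 - α) = -(α - 2) by ring, Real.rpow_neg hξ.1.le]
    have e2 : ξ ^ (2 - α - 1) = (ξ ^ (α - 1))⁻¹ := by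
      rw [show (2 - α - 1) = -(α - 1) by ring, Real.rpow_neg hξ.1.le]
    rw [e1, e2]
    field_simp
  have hcont : ContinuousOn H (Icc 0 1) := by
    intro ξ hξ
    rcases eq_or_ne ξ 0 with rfl | hne
    · have hbound : ∀ t ∈ Icc (0:ℝ) 1, ‖H t‖ ≤ |x| * t ^ (3 - α) := by
        rintro t ⟨ht0, ht1⟩
        rcases eq_or_lt_of_le ht0 with rfl | ht0'
        · simp [hH, Real.zero_rpow (by linarith : (2:ℝ) - α ≠ 0),
            Real.zero_rpow (by linarith : (3:ℝ) - α ≠ 0)]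
        · have hsin : |Real.sin (x * t)| ≤ |x| * t := by
            calc |Real.sin (x * t)| ≤ |x * t| := Real.abs_sin_le_abs
              _ = |x| * t := by rw [abs_mul, abs_of_nonneg ht0]
          have hpow : 0 ≤ t ^ (2 - α) := Real.rpow_nonneg ht0 _
          have hpows : t * t ^ (2 - α) = t ^ (3 - α) := by
            rw [show (3:ℝ) - α = 1 + (2 - α) by ring, Real.rpow_add ht0', Real.rpow_one]
          rw [hH, Real.norm_eq_abs, abs_mul, abs_of_nonneg hpow]
          calc |Real.sin (x * t)| * t ^ (2 - α) ≤ |x| * t * t ^ (2 - α) :=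
                mul_le_mul_of_nonneg_right hsin hpow
            _ = |x| * (t * t ^ (2 - α)) := by ring
            _ = |x| * t ^ (3 - α) := by rw [hpows]
      rw [ContinuousWithinAt, hH0]
      have hg : Tendsto (fun t : ℝ => |x| * t ^ (3 - α)) (nhdsWithin 0 (Icc 0 1)) (nhds 0) := by
        have := ((cont_rpow (by linarith : (0:ℝ) ≤ 3 - α)).tendsto 0).const_mul |x|
        rw [Real.zero_rpow (by linarith : (3:ℝ) - α ≠ 0), mul_zero] at this
        exact this.mono_left nhdsWithin_le_nhds
      exact squeeze_zero_norm' (eventually_nhdsWithin_of_forall hbound) hg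
    · exact ((Continuous.continuousAt (by continuity)).mul
        (Real.continuousAt_rpow_const ξ _ (Or.inl hne))).continuousWithinAt
  have hint : IntervalIntegrable (fun ξ =>
      x * (Real.cos (x * ξ) / ξ ^ (α - 2)) + (2 - α) * (Real.sin (x * ξ) / ξ ^ (α - 1)))
      volume 0 1 :=
    ((intK'' hα2 hα3 x).const_mul x).add ((intK' hα2 hα3 x).const_mul (2 - α))
  have hFTC := integral_eq_sub_of_hasDeriv_right_of_le zero_le_one hcont
    (fun ξ hξ => (hderiv ξ hξ).hasDerivWithinAt) hint
  rw [intervalIntegral.integral_add ((intK'' hα2 hα3 x).const_mul x)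
      ((intK' hα2 hα3 x).const_mul (2 - α)),
    intervalIntegral.integral_const_mul, intervalIntegral.integral_const_mul, hH0] at hFTC
  have hH1 : H 1 = Real.sin x := by simp [hH]
  rw [hH1] at hFTC
  linarith

end B2

section B3
variable {α : ℝ}

lemma integrand_nonneg (x : ℝ) {ξ : ℝ} (hξ : 0 ≤ ξ) :
    0 ≤ (1 - Real.cos (x * ξ)) / ξ ^ α :=
  div_nonneg (by nlinarith [Real.cos_le_one (x * ξ)]) (Real.rpow_nonneg hξ _)

lemma Kpos (hα2 : 2 < α) (hα3 : α < 3) {x : ℝ} (hx : 0 < x) :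
    0 < ∫ ξ in (0:ℝ)..1, (1 - Real.cos (x * ξ)) / ξ ^ α := by
  set m := min 1 (π / x) with hm
  have hm0 : 0 < m := lt_min one_pos (div_pos Real.pi_pos hx)
  have hm1 : m ≤ 1 := min_le_left _ _
  have hsub : uIcc 0 m ⊆ uIcc (0:ℝ) 1 := by
    rw [uIcc_of_le hm0.le, uIcc_of_le zero_le_one]
    exact Icc_subset_Icc le_rfl hm1
  have hsub2 : uIcc m 1 ⊆ uIcc (0:ℝ) 1 := by
    rw [uIcc_of_le hm1, uIcc_of_le zero_le_one]
    exact Icc_subset_Icc hm0.le le_rfl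
  have hmain : 0 < ∫ ξ in (0:ℝ)..m, (1 - Real.cos (x * ξ)) / ξ ^ α := by
    refine intervalIntegral_pos_of_pos_on ((intK hα2 hα3 x).mono_set hsub) ?_ hm0
    rintro ξ ⟨h0, h1⟩
    have hxξ0 : 0 < x * ξ := mul_pos hx h0
    have hxξπ : x * ξ ≤ π := by
      have : ξ ≤ π / x := lt_of_lt_of_le h1 (min_le_right _ _) |>.le
      calc x * ξ ≤ x * (π / x) := by nlinarith
        _ = π := by field_simp
    have hcos : Real.cos (x * ξ) < 1 := by
      have h := Real.cos_le_one_sub_mul_cos_sq (x := x * ξ) (by rw [abs_of_pos hxξ0]; exact hxξπ)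
      have hq : 0 < 2 / π ^ 2 * (x * ξ) ^ 2 := by positivity
      linarith
    exact div_pos (by linarith) (Real.rpow_pos_of_pos h0 _)
  have hrest : 0 ≤ ∫ ξ in m..1, (1 - Real.cos (x * ξ)) / ξ ^ α :=
    intervalIntegral.integral_nonneg hm1 fun ξ hξ => integrand_nonneg x (le_trans hm0.le hξ.1)
  have hsplit := intervalIntegral.integral_add_adjacent_intervals
    ((intK hα2 hα3 x).mono_set hsub) ((intK hα2 hα3 x).mono_set hsub2)
  rw [← hsplit]
  linarith

lemma Klower (hα2 : 2 < α) (hα3 : α < 3) {x : ℝ} (hx : π ≤ x) :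
    2 * x / π ≤ ∫ ξ in (0:ℝ)..1, (1 - Real.cos (x * ξ)) / ξ ^ α := by
  have hx0 : 0 < x := lt_of_lt_of_le Real.pi_pos hx
  set m := π / x with hm
  have hm0 : 0 < m := div_pos Real.pi_pos hx0
  have hm1 : m ≤ 1 := (div_le_one hx0).2 hx
  have hsub : uIcc 0 m ⊆ uIcc (0:ℝ) 1 := by
    rw [uIcc_of_le hm0.le, uIcc_of_le zero_le_one]
    exact Icc_subset_Icc le_rfl hm1
  have hsub2 : uIcc m 1 ⊆ uIcc (0:ℝ) 1 := by
    rw [uIcc_of_le hm1, uIcc_of_le zero_le_one]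
    exact Icc_subset_Icc hm0.le le_rfl
  -- pointwise lower bound on [0, m]
  have hmono : (∫ ξ in (0:ℝ)..m, 2 * x ^ 2 / π ^ 2 * ξ ^ (2 - α)) ≤
      ∫ ξ in (0:ℝ)..m, (1 - Real.cos (x * ξ)) / ξ ^ α := by
    refine intervalIntegral.integral_mono_on hm0.le
      ((intervalIntegrable_rpow' (by linarith)).const_mul _)
      ((intK hα2 hα3 x).mono_set hsub) ?_
    rintro ξ ⟨h0, h1⟩
    rcases eq_or_lt_of_le h0 with rfl | h0'
    · rw [Real.zero_rpow (by linarith : (2:ℝ) - α ≠ 0)]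
      simpa using integrand_nonneg (α := α) x le_rfl
    · have hξα : 0 < ξ ^ α := Real.rpow_pos_of_pos h0' _
      rw [le_div_iff₀ hξα]
      have hpow : ξ ^ (2 - α) * ξ ^ α = ξ ^ 2 := by
        rw [← Real.rpow_add h0', ← Real.rpow_natCast ξ 2]
        norm_num
      have hxξπ : x * ξ ≤ π := by
        calc x * ξ ≤ x * (π / x) := by nlinarith
          _ = π := by field_simp
      have hcos := Real.cos_le_one_sub_mul_cos_sq (x := x * ξ)
        (by rw [abs_of_pos (mul_pos hx0 h0')]; exact hxξπ)
      calc 2 * x ^ 2 / π ^ 2 * ξ ^ (2 - α) * ξ ^ α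
          = 2 * x ^ 2 / π ^ 2 * (ξ ^ (2 - α) * ξ ^ α) := by ring
        _ = 2 * x ^ 2 / π ^ 2 * ξ ^ 2 := by rw [hpow]
        _ = 2 / π ^ 2 * (x * ξ) ^ 2 := by ring
        _ ≤ 1 - Real.cos (x * ξ) := by linarith
  have hcomp : (∫ ξ in (0:ℝ)..m, 2 * x ^ 2 / π ^ 2 * ξ ^ (2 - α)) =
      2 * x ^ 2 / π ^ 2 * (m ^ (3 - α) / (3 - α)) := by
    rw [intervalIntegral.integral_const_mul, integral_rpow (Or.inl (by linarith)),
      show (2:ℝ) - α + 1 = 3 - α by ring,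
      Real.zero_rpow (by linarith : (3:ℝ) - α ≠ 0)]
    ring
  have hlow : 2 * x / π ≤ 2 * x ^ 2 / π ^ 2 * (m ^ (3 - α) / (3 - α)) := by
    have hmsplit : m ^ ((3:ℝ) - α) = m * m ^ (2 - α) := by
      rw [show (3:ℝ) - α = 1 + (2 - α) by ring, Real.rpow_add hm0, Real.rpow_one]
    have hmge : 1 ≤ m ^ ((2:ℝ) - α) :=
      Real.one_le_rpow_of_pos_of_le_one_of_nonpos hm0 hm1 (by linarith)
    have h3α : 0 < 3 - α := by linarith
    have h3α1 : 3 - α ≤ 1 := by linarith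
    have hπ := Real.pi_pos
    rw [hmsplit, hm]
    have e : 2 * x ^ 2 / π ^ 2 * (π / x * (π / x) ^ ((2:ℝ) - α) / (3 - α)) =
        2 * x / π * ((π / x) ^ ((2:ℝ) - α) / (3 - α)) := by
      field_simp
    rw [e]
    have hpos : 0 < 2 * x / π := by positivity
    have h1 : (1:ℝ) ≤ (π / x) ^ ((2:ℝ) - α) / (3 - α) := by
      rw [le_div_iff₀ h3α]
      rw [hm] at hmge
      linarith
    nlinarith [mul_le_mul_of_nonneg_left h1 hpos.le]
  have hrest : 0 ≤ ∫ ξ in m..1, (1 - Real.cos (x * ξ)) / ξ ^ α :=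
    intervalIntegral.integral_nonneg hm1 fun ξ hξ => integrand_nonneg x (le_trans hm0.le hξ.1)
  have hsplit := intervalIntegral.integral_add_adjacent_intervals
    ((intK hα2 hα3 x).mono_set hsub) ((intK hα2 hα3 x).mono_set hsub2)
  rw [← hsplit]
  linarith

end B3

section B4
variable {α : ℝ}

lemma K'geSin (hα2 : 2 < α) (hα3 : α < 3) {x : ℝ} (hx0 : 0 < x) (hxπ : x ≤ π) :
    Real.sin x ≤ ∫ ξ in (0:ℝ)..1, Real.sin (x * ξ) / ξ ^ (α - 1) := by
  have hs : 0 ≤ Real.sin x := Real.sin_nonneg_of_nonneg_of_le_pi hx0.le hxπ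
  have hmono : (∫ ξ in (0:ℝ)..1, Real.sin x * ξ ^ (2 - α)) ≤
      ∫ ξ in (0:ℝ)..1, Real.sin (x * ξ) / ξ ^ (α - 1) := by
    refine intervalIntegral.integral_mono_on zero_le_one
      ((intervalIntegrable_rpow' (by linarith)).const_mul _) (intK' hα2 hα3 x) ?_
    rintro ξ ⟨h0, h1⟩
    rcases eq_or_lt_of_le h0 with rfl | h0'
    · simp [Real.zero_rpow (by linarith : (2:ℝ) - α ≠ 0),
        Real.zero_rpow (by linarith : α - 1 ≠ 0)]
    · have hξα : 0 < ξ ^ (α - 1) := Real.rpow_pos_of_pos h0' _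
      rw [le_div_iff₀ hξα]
      have hpow : ξ ^ (2 - α) * ξ ^ (α - 1) = ξ := by
        rw [← Real.rpow_add h0']
        norm_num
      have hconc : ξ * Real.sin x ≤ Real.sin (x * ξ) := by
        have hc := strictConcaveOn_sin_Icc.concaveOn.2
          (Set.mem_Icc.2 ⟨hx0.le, hxπ⟩)
          (Set.mem_Icc.2 ⟨le_rfl, Real.pi_pos.le⟩)
          h0 (by linarith : 0 ≤ 1 - ξ) (by ring)
        simp only [smul_eq_mul, mul_zero, Real.sin_zero, add_zero, mul_comm ξ x] at hc
        linarith [hc]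
      calc Real.sin x * ξ ^ (2 - α) * ξ ^ (α - 1)
          = Real.sin x * (ξ ^ (2 - α) * ξ ^ (α - 1)) := by ring
        _ = Real.sin x * ξ := by rw [hpow]
        _ ≤ Real.sin (x * ξ) := by rw [mul_comm]; exact hconc
  have hcomp : (∫ ξ in (0:ℝ)..1, Real.sin x * ξ ^ (2 - α)) = Real.sin x * (1 / (3 - α)) := by
    rw [intervalIntegral.integral_const_mul, integral_rpow (Or.inl (by linarith)),
      show (2:ℝ) - α + 1 = 3 - α by ring,
      Real.zero_rpow (by linarith : (3:ℝ) - α ≠ 0), Real.one_rpow]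
    ring
  rw [hcomp] at hmono
  have h1 : (1:ℝ) ≤ 1 / (3 - α) := by
    rw [le_div_iff₀ (by linarith : (0:ℝ) < 3 - α)]
    linarith
  nlinarith [mul_le_mul_of_nonneg_left h1 hs]

lemma keycalc {α x k a d u s : ℝ} (hα2 : 2 < α) (hα3 : α < 3) (hx : 0 < x)
    (e1 : x * a = (α - 1) * k + u) (e2 : x * d = (α - 2) * a + s)
    (hk : 0 < k) (hu : 0 ≤ u) (hs1 : s ≤ 1)
    (hcase : (0 ≤ s ∧ s ≤ a) ∨ 2 / π ≤ a) :
    0 < 2 * a ^ 2 - k * d := by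
  have hxa : u < x * a := by nlinarith
  have ha : 0 < a := by
    rcases le_or_gt a 0 with h | h
    · exfalso
      nlinarith [mul_nonpos_of_nonneg_of_nonpos hx.le h]
    · exact h
  have key : (α - 1) * x * (2 * a ^ 2 - k * d) =
      α * x * a ^ 2 - x * a * s + (α - 2) * u * a + u * s := by
    linear_combination ((α - 2) * a + s) * e1 - (α - 1) * k * e2
  have hRHS : 0 < α * x * a ^ 2 - x * a * s + (α - 2) * u * a + u * s := by
    rcases hcase with ⟨hs0, hsa⟩ | h2π
    · have t1 : 0 ≤ (a - s) * (x * a - u) :=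
        mul_nonneg (by linarith) (by linarith)
      have t2 : 0 < x * (a * a) := mul_pos hx (mul_pos ha ha)
      have t3 : 0 ≤ u * a := mul_nonneg hu ha.le
      nlinarith [mul_pos (by linarith : (0:ℝ) < α - 1) t2,
        mul_nonneg (by linarith : (0:ℝ) ≤ α - 1) t3]
    · have hπ := Real.pi_pos
      have hpi4 : π < 4 := by linarith [Real.pi_lt_d2]
      have ha2 : 1 / 2 < a := by
        refine lt_of_lt_of_le ?_ h2π
        rw [div_lt_div_iff₀ (by norm_num) hπ]
        linarith
      have t1 : 0 ≤ (1 - s) * (x * a - u) := mul_nonneg (by linarith) (by linarith)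
      have t2 : 0 < x * a * (2 * a - 1) := mul_pos (mul_pos hx ha) (by linarith)
      have t3 : 0 ≤ (α - 2) * (x * (a * a)) :=
        mul_nonneg (by linarith) (mul_nonneg hx.le (mul_nonneg ha.le ha.le))
      have t4 : 0 ≤ (α - 2) * (u * a) := mul_nonneg (by linarith) (mul_nonneg hu ha.le)
      nlinarith
  have hmul : 0 < (α - 1) * x := mul_pos (by linarith) hx
  by_contra hcon
  push_neg at hcon
  nlinarith [mul_nonpos_of_nonneg_of_nonpos hmul.le hcon]

end B4






section C
variable {α : ℝ}

lemma hasDerivKint (hα2 : 2 < α) (hα3 : α < 3) (x₀ : ℝ) :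
    HasDerivAt (fun x => ∫ ξ in (0:ℝ)..1, (1 - Real.cos (x * ξ)) / ξ ^ α)
      (∫ ξ in (0:ℝ)..1, Real.sin (x₀ * ξ) / ξ ^ (α - 1)) x₀ := by
  have h := intervalIntegral.hasDerivAt_integral_of_dominated_loc_of_deriv_le
    (μ := volume) (F := fun x ξ => (1 - Real.cos (x * ξ)) / ξ ^ α)
    (F' := fun x ξ => Real.sin (x * ξ) / ξ ^ (α - 1)) (x₀ := x₀) (a := 0) (b := 1)
    (bound := fun ξ => (|x₀| + 1) * ξ ^ (2 - α)) (s := ball x₀ 1) (ball_mem_nhds x₀ one_pos)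
    (Eventually.of_forall fun x =>
      (meas_div (by linarith : (0:ℝ) ≤ α) (by continuity)).aestronglyMeasurable)
    (intK hα2 hα3 x₀)
    ((meas_div (by linarith : (0:ℝ) ≤ α - 1) (by continuity)).aestronglyMeasurable)
    ?_ ((intervalIntegrable_rpow' (by linarith)).const_mul _) ?_
  · exact h.2
  · refine ae_of_all _ fun ξ hξ x hx => ?_
    rw [uIoc_of_le zero_le_one] at hξ
    obtain ⟨h0, h1⟩ := hξ
    have hξα : 0 < ξ ^ (α - 1) := Real.rpow_pos_of_pos h0 _
    have hxb : |x| ≤ |x₀| + 1 := by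
      have := mem_ball_iff_norm.1 hx
      have h2 := abs_sub_abs_le_abs_sub x x₀
      rw [Real.norm_eq_abs] at this
      linarith
    have hsin : |Real.sin (x * ξ)| ≤ |x| * ξ := by
      calc |Real.sin (x * ξ)| ≤ |x * ξ| := Real.abs_sin_le_abs
        _ = |x| * ξ := by rw [abs_mul, abs_of_nonneg h0.le]
    rw [Real.norm_eq_abs, abs_div, abs_of_nonneg hξα.le, div_le_iff₀ hξα]
    have hpow : ξ ^ (2 - α) * ξ ^ (α - 1) = ξ := by
      rw [← Real.rpow_add h0]
      norm_num
    calc |Real.sin (x * ξ)| ≤ |x| * ξ := hsin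
      _ ≤ (|x₀| + 1) * ξ := by nlinarith
      _ = (|x₀| + 1) * (ξ ^ (2 - α) * ξ ^ (α - 1)) := by rw [hpow]
      _ = (|x₀| + 1) * ξ ^ (2 - α) * ξ ^ (α - 1) := by ring
  · refine ae_of_all _ fun ξ hξ x hx => ?_
    rw [uIoc_of_le zero_le_one] at hξ
    obtain ⟨h0, h1⟩ := hξ
    have h1d : HasDerivAt (fun x => 1 - Real.cos (x * ξ)) (ξ * Real.sin (x * ξ)) x := by
      have h := ((Real.hasDerivAt_cos (x * ξ)).comp x ((hasDerivAt_id x).mul_const ξ)).const_sub 1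
      exact h.congr_deriv (by simp only [id_eq, mul_one, one_mul]; ring)
    have h2d := h1d.div_const (ξ ^ α)
    refine h2d.congr_deriv ?_
    have hpow : ξ ^ α = ξ ^ (α - 1) * ξ := by
      rw [show α = (α - 1) + 1 by ring, Real.rpow_add h0, Real.rpow_one]
      ring_nf
    rw [hpow]
    field_simp

lemma hasDerivK'int (hα2 : 2 < α) (hα3 : α < 3) (x₀ : ℝ) :
    HasDerivAt (fun x => ∫ ξ in (0:ℝ)..1, Real.sin (x * ξ) / ξ ^ (α - 1))
      (∫ ξ in (0:ℝ)..1, Real.cos (x₀ * ξ) / ξ ^ (α - 2)) x₀ := by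
  have h := intervalIntegral.hasDerivAt_integral_of_dominated_loc_of_deriv_le
    (μ := volume) (F := fun x ξ => Real.sin (x * ξ) / ξ ^ (α - 1))
    (F' := fun x ξ => Real.cos (x * ξ) / ξ ^ (α - 2)) (x₀ := x₀) (a := 0) (b := 1)
    (bound := fun ξ => ξ ^ (2 - α)) (s := ball x₀ 1) (ball_mem_nhds x₀ one_pos)
    (Eventually.of_forall fun x =>
      (meas_div (by linarith : (0:ℝ) ≤ α - 1) (by continuity)).aestronglyMeasurable)
    (intK' hα2 hα3 x₀)
    ((meas_div (by linarith : (0:ℝ) ≤ α - 2) (by continuity)).aestronglyMeasurable)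
    ?_ (intervalIntegrable_rpow' (by linarith)) ?_
  · exact h.2
  · refine ae_of_all _ fun ξ hξ x hx => ?_
    rw [uIoc_of_le zero_le_one] at hξ
    obtain ⟨h0, h1⟩ := hξ
    have hξα : 0 < ξ ^ (α - 2) := Real.rpow_pos_of_pos h0 _
    rw [Real.norm_eq_abs, abs_div, abs_of_nonneg hξα.le, div_le_iff₀ hξα]
    have hpow : ξ ^ (2 - α) * ξ ^ (α - 2) = 1 := by
      rw [← Real.rpow_add h0]
      norm_num
    calc |Real.cos (x * ξ)| ≤ 1 := Real.abs_cos_le_one _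
      _ = ξ ^ (2 - α) * ξ ^ (α - 2) := hpow.symm
  · refine ae_of_all _ fun ξ hξ x hx => ?_
    rw [uIoc_of_le zero_le_one] at hξ
    obtain ⟨h0, h1⟩ := hξ
    have h1d : HasDerivAt (fun x => Real.sin (x * ξ)) (ξ * Real.cos (x * ξ)) x := by
      have h := (Real.hasDerivAt_sin (x * ξ)).comp x ((hasDerivAt_id x).mul_const ξ)
      exact h.congr_deriv (by simp only [id_eq, mul_one, one_mul]; ring)
    have h2d := h1d.div_const (ξ ^ (α - 1))
    refine h2d.congr_deriv ?_
    have hpow : ξ ^ (α - 1) = ξ ^ (α - 2) * ξ := by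
      rw [show α - 1 = (α - 2) + 1 by ring, Real.rpow_add h0, Real.rpow_one]
    rw [hpow]
    field_simp

end C

end InvLambdaAux18

open InvLambdaAux18 Real

/-- For α ∈ (2,3), δ > 0, with K(x) = ∫₀¹ (1−cos(xξ))/ξ^α dξ and
λ_δ(n) = (2(3−α)/δ²) K(nδ), the map n ↦ 1/λ_δ(n) is strictly decreasing and
strictly convex on (0,∞); equivalently 2(K'(x))² − K(x)K''(x) > 0 for x > 0. -/
theorem inv_lambda_decreasing_convex (α δ : ℝ) (hα : α ∈ Set.Ioo (2:ℝ) 3)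
    (hδ : 0 < δ)
    (K K' K'' : ℝ → ℝ)
    (hK : ∀ x : ℝ, K x = ∫ ξ in (0:ℝ)..1, (1 - Real.cos (x * ξ)) / ξ ^ α)
    (hK' : ∀ x : ℝ, K' x = ∫ ξ in (0:ℝ)..1, Real.sin (x * ξ) / ξ ^ (α - 1))
    (hK'' : ∀ x : ℝ, K'' x = ∫ ξ in (0:ℝ)..1, Real.cos (x * ξ) / ξ ^ (α - 2)) :
    StrictAntiOn (fun n : ℝ => 1 / (2 * (3 - α) / δ ^ 2 * K (n * δ)))
      (Set.Ioi (0:ℝ)) ∧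
    StrictConvexOn ℝ (Set.Ioi (0:ℝ))
      (fun n : ℝ => 1 / (2 * (3 - α) / δ ^ 2 * K (n * δ))) ∧
    (∀ x : ℝ, 0 < x → 0 < 2 * (K' x) ^ 2 - K x * K'' x) := by
  obtain ⟨hα2, hα3⟩ := hα
  have hKfun : K = fun x => ∫ ξ in (0:ℝ)..1, (1 - Real.cos (x * ξ)) / ξ ^ α := funext hK
  have hK'fun : K' = fun x => ∫ ξ in (0:ℝ)..1, Real.sin (x * ξ) / ξ ^ (α - 1) := funext hK'
  have hKd : ∀ y : ℝ, HasDerivAt K (K' y) y := by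
    intro y
    rw [hK' y, hKfun]
    exact hasDerivKint hα2 hα3 y
  have hK'd : ∀ y : ℝ, HasDerivAt K' (K'' y) y := by
    intro y
    rw [hK'' y, hK'fun]
    exact hasDerivK'int hα2 hα3 y
  have hKpos : ∀ y : ℝ, 0 < y → 0 < K y := fun y hy => by
    rw [hK y]; exact Kpos hα2 hα3 hy
  have ode1' : ∀ y : ℝ, y * K' y = (α - 1) * K y + (1 - Real.cos y) := fun y => by
    rw [hK y, hK' y]; exact ode1 hα2 hα3 y
  have ode2' : ∀ y : ℝ, y * K'' y = (α - 2) * K' y + Real.sin y := fun y => by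
    rw [hK' y, hK'' y]; exact ode2 hα2 hα3 y
  have hK'pos : ∀ y : ℝ, 0 < y → 0 < K' y := by
    intro y hy
    have h1 := ode1' y
    have h2 := hKpos y hy
    have h3 : 0 ≤ 1 - Real.cos y := by nlinarith [Real.cos_le_one y]
    rcases lt_or_ge 0 (K' y) with h | h
    · exact h
    · exfalso; nlinarith [mul_nonpos_of_nonneg_of_nonpos hy.le h]
  have hkey : ∀ y : ℝ, 0 < y → 0 < 2 * (K' y) ^ 2 - K y * K'' y := by
    intro y hy
    refine keycalc hα2 hα3 hy (ode1' y) (ode2' y) (hKpos y hy)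
      (by nlinarith [Real.cos_le_one y]) (Real.sin_le_one y) ?_
    rcases le_or_gt y π with h | h
    · left
      refine ⟨Real.sin_nonneg_of_nonneg_of_le_pi hy.le h, ?_⟩
      rw [hK' y]
      exact K'geSin hα2 hα3 hy h
    · right
      have hKl : 2 * y / π ≤ K y := by rw [hK y]; exact Klower hα2 hα3 h.le
      have h1 := ode1' y
      have hKnn := (hKpos y hy).le
      have hcos : 0 ≤ 1 - Real.cos y := by nlinarith [Real.cos_le_one y]
      have hα2K : 0 ≤ (α - 2) * K y := mul_nonneg (by linarith) hKnn
      have h2 : y * (2 / π) ≤ y * K' y := by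
        have hy2 : y * (2 / π) = 2 * y / π := by ring
        rw [hy2]
        linarith
      exact le_of_mul_le_mul_left h2 hy
  set c : ℝ := 2 * (3 - α) / δ ^ 2 with hcdef
  have hc : 0 < c := div_pos (by nlinarith) (by positivity)
  have hgd : ∀ n : ℝ, HasDerivAt (fun m : ℝ => c * K (m * δ)) (c * (K' (n * δ) * δ)) n := by
    intro n
    have h1 : HasDerivAt (fun m : ℝ => m * δ) δ n := by
      simpa using (hasDerivAt_id n).mul_const δ
    have h2 := (hKd (n * δ)).comp n h1
    exact h2.const_mul c
  have hfd : ∀ n : ℝ, 0 < n → HasDerivAt (fun m : ℝ => 1 / (c * K (m * δ)))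
      (-(c * (K' (n * δ) * δ)) / (c * K (n * δ)) ^ 2) n := by
    intro n hn
    have hne : c * K (n * δ) ≠ 0 := ne_of_gt (mul_pos hc (hKpos _ (mul_pos hn hδ)))
    have h := (hgd n).fun_inv hne
    simpa only [one_div] using h
  have hcont : ContinuousOn (fun n : ℝ => 1 / (c * K (n * δ))) (Set.Ioi 0) :=
    fun n hn => ((hfd n hn).continuousAt).continuousWithinAt
  refine ⟨?_, ?_, hkey⟩
  · refine strictAntiOn_of_deriv_neg (convex_Ioi 0) hcont ?_
    intro n hn
    rw [interior_Ioi] at hn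
    rw [(hfd n hn).deriv]
    have hnum : 0 < c * (K' (n * δ) * δ) :=
      mul_pos hc (mul_pos (hK'pos _ (mul_pos hn hδ)) hδ)
    have hden : 0 < (c * K (n * δ)) ^ 2 :=
      pow_pos (mul_pos hc (hKpos _ (mul_pos hn hδ))) 2
    exact div_neg_of_neg_of_pos (by linarith) hden
  · refine strictConvexOn_of_deriv2_pos (convex_Ioi 0) hcont ?_
    intro n hn
    rw [interior_Ioi] at hn
    rw [show (2:ℕ) = 1 + 1 from rfl, Function.iterate_succ_apply', Function.iterate_one]
    have hEq : (Set.Ioi (0:ℝ)).EqOn (deriv (fun m : ℝ => 1 / (c * K (m * δ))))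
        (fun m : ℝ => -(c * (K' (m * δ) * δ)) / (c * K (m * δ)) ^ 2) :=
      fun m hm => (hfd m hm).deriv
    have hev : deriv (fun m : ℝ => 1 / (c * K (m * δ))) =ᶠ[nhds n]
        (fun m : ℝ => -(c * (K' (m * δ) * δ)) / (c * K (m * δ)) ^ 2) :=
      Filter.eventuallyEq_of_mem (isOpen_Ioi.mem_nhds hn) hEq
    rw [hev.deriv_eq]
    have h1 : HasDerivAt (fun m : ℝ => m * δ) δ n := by
      simpa using (hasDerivAt_id n).mul_const δ
    have hnum : HasDerivAt (fun m : ℝ => -(c * (K' (m * δ) * δ)))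
        (-(c * (K'' (n * δ) * δ * δ))) n := by
      have h2 := (hK'd (n * δ)).comp n h1
      have h3 := ((h2.mul_const δ).const_mul c).neg
      exact h3
    have hden : HasDerivAt (fun m : ℝ => (c * K (m * δ)) ^ 2)
        ((2:ℕ) * (c * K (n * δ)) ^ 1 * (c * (K' (n * δ) * δ))) n := (hgd n).pow 2
    have hKn : 0 < K (n * δ) := hKpos _ (mul_pos hn hδ)
    have hdne : (c * K (n * δ)) ^ 2 ≠ 0 := ne_of_gt (pow_pos (mul_pos hc hKn) 2)
    have hφd := hnum.fun_div hden hdne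
    rw [hφd.deriv]
    have hkeyn := hkey (n * δ) (mul_pos hn hδ)
    have heq : (-(c * (K'' (n * δ) * δ * δ)) * (c * K (n * δ)) ^ 2 -
          -(c * (K' (n * δ) * δ)) * ((2:ℕ) * (c * K (n * δ)) ^ 1 * (c * (K' (n * δ) * δ)))) /
          ((c * K (n * δ)) ^ 2) ^ 2 =
        δ ^ 2 * (2 * K' (n * δ) ^ 2 - K (n * δ) * K'' (n * δ)) / (c * K (n * δ) ^ 3) := by
      field_simp
      ring
    rw [heq]
    exact div_pos (mul_pos (by positivity) hkeyn) (by positivity)
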